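/- arXiv:0812.2573 — 7 statements merged into one kernel-verified Lean document; each statement's English description precedes it below -/
import Mathlib

section
/- Let V be a finite-dimensional complex inner product space, φ : V → V self-adjoint, and v ∈ V∖{0} a vector that is NOT an eigenvector of φ. Then the function t ↦ −(1/2)·⟨φ e^{tφ}v, e^{tφ}v⟩/⟨e^{tφ}v, e^{tφ}v⟩ is strictly decreasing on ℝ; equivalently, the Rayleigh quotient t ↦ ⟨φ e^{tφ}v, e^{tφ}v⟩/⟨e^{tφ}v, e^{tφ}v⟩ is strictly increasing along the flow. (The height function f([v]) = −(1/2)⟨φv,v⟩/⟨v,v⟩ is strictly decreasing along non-constant flow lines of the projective flow generated by φ.) -/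
open scoped ComplexInnerProductSpace
open NormedSpace

lemma aux_strictCS {V : Type*} [NormedAddCommGroup V] [InnerProductSpace ℂ V]
    (φ : V →ₗ[ℂ] V) (w : V) (hw : w ≠ 0) (hev : ¬∃ c : ℂ, φ w = c • w) :
    (Complex.re ⟪φ w, w⟫) ^ 2 < ‖φ w‖ ^ 2 * ‖w‖ ^ 2 := by
  have hφw : φ w ≠ 0 := by
    intro h; exact hev ⟨0, by simp [h]⟩
  have hlt : ‖⟪φ w, w⟫‖ < ‖φ w‖ * ‖w‖ := by
    rcases lt_or_eq_of_le (norm_inner_le_norm (𝕜 := ℂ) (φ w) w) with h | h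
    · exact h
    · exfalso
      obtain ⟨r, hr, hrw⟩ := (norm_inner_eq_norm_iff hφw hw).mp h
      refine hev ⟨r⁻¹, ?_⟩
      conv_rhs => rw [hrw]
      rw [smul_smul, inv_mul_cancel₀ hr, one_smul]
  have h1 : |Complex.re ⟪φ w, w⟫| ≤ ‖⟪φ w, w⟫‖ := Complex.abs_re_le_norm _
  calc (Complex.re ⟪φ w, w⟫) ^ 2 = |Complex.re ⟪φ w, w⟫| ^ 2 := (sq_abs _).symm
    _ ≤ ‖⟪φ w, w⟫‖ ^ 2 := by gcongr
    _ < (‖φ w‖ * ‖w‖) ^ 2 := by gcongr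
    _ = ‖φ w‖ ^ 2 * ‖w‖ ^ 2 := by ring

lemma aux_strictMono {V : Type*} [NormedAddCommGroup V] [InnerProductSpace ℂ V]
    [FiniteDimensional ℂ V]
    (φ : V →ₗ[ℂ] V) (hφ : LinearMap.IsSymmetric φ) (v : V) (hv : v ≠ 0)
    (hev : ¬∃ c : ℂ, φ v = c • v) :
    StrictMono (fun t : ℝ =>
      Complex.re ⟪φ (NormedSpace.exp (t • LinearMap.toContinuousLinearMap φ) v),
          NormedSpace.exp (t • LinearMap.toContinuousLinearMap φ) v⟫ /
      Complex.re ⟪NormedSpace.exp (t • LinearMap.toContinuousLinearMap φ) v,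
          NormedSpace.exp (t • LinearMap.toContinuousLinearMap φ) v⟫) := by
  set A := LinearMap.toContinuousLinearMap φ with hA
  have hAφ : ∀ x : V, A x = φ x := fun x => rfl
  set w : ℝ → V := fun t => exp (t • A) v with hwdef
  -- basic facts for each t
  have hinv : ∀ t : ℝ, exp (-(t • A)) * exp (t • A) = 1 := fun t => by
    letI : NormedAlgebra ℚ (V →L[ℂ] V) := NormedAlgebra.restrictScalars ℚ ℂ _
    rw [← exp_add_of_commute ((Commute.refl (t • A)).neg_left)]; simp
  have hwne : ∀ t : ℝ, w t ≠ 0 := by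
    intro t h
    have : (exp (-(t • A)) * exp (t • A)) v = 0 := by
      rw [ContinuousLinearMap.mul_apply]
      change exp (-(t • A)) (w t) = 0
      rw [h, map_zero]
    rw [hinv t, ContinuousLinearMap.one_apply] at this
    exact hv this
  have hcomm : ∀ t : ℝ, A * exp (t • A) = exp (t • A) * A :=
    fun t => (((Commute.refl A).smul_right t).exp_right).eq
  have hwev : ∀ t : ℝ, ¬∃ c : ℂ, φ (w t) = c • w t := by
    rintro t ⟨c, hc⟩
    refine hev ⟨c, ?_⟩
    have h1 : exp (t • A) (A v) = exp (t • A) (c • v) := by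
      rw [← ContinuousLinearMap.mul_apply, ← hcomm t, ContinuousLinearMap.mul_apply]
      rw [map_smul]
      exact (hAφ (w t)) ▸ hc
    have h2 : (exp (-(t • A)) * exp (t • A)) (A v)
        = (exp (-(t • A)) * exp (t • A)) (c • v) := by
      simp only [ContinuousLinearMap.mul_apply, h1]
    rw [hinv t] at h2
    simpa [hAφ] using h2
  -- derivative of w
  have hw' : ∀ t : ℝ, HasDerivAt w (A (w t)) t := by
    intro t
    have h1 : HasDerivAt (fun u : ℝ => exp (u • A)) (A * exp (t • A)) t :=
      hasDerivAt_exp_smul_const' A t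
    have := (((ContinuousLinearMap.apply ℂ V v).restrictScalars ℝ).hasFDerivAt.comp_hasDerivAt t h1)
    simpa [Function.comp_def] using this
  -- derivative of A ∘ w
  have hAw' : ∀ t : ℝ, HasDerivAt (fun t => A (w t)) (A (A (w t))) t := by
    intro t
    have := ((A.restrictScalars ℝ).hasFDerivAt.comp_hasDerivAt t (hw' t))
    simpa [Function.comp_def] using this
  -- numerator and denominator
  set N : ℝ → ℝ := fun t => Complex.re ⟪φ (w t), w t⟫ with hNdef
  set D : ℝ → ℝ := fun t => Complex.re ⟪w t, w t⟫ with hDdef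
  have hN : ∀ t : ℝ, HasDerivAt N
      (Complex.re (⟪A (w t), A (w t)⟫ + ⟪A (A (w t)), w t⟫)) t := by
    intro t
    have h1 : HasDerivAt (fun t => (⟪A (w t), w t⟫ : ℂ))
        (⟪A (w t), A (w t)⟫ + ⟪A (A (w t)), w t⟫) t :=
      HasDerivAt.inner ℂ (hAw' t) (hw' t)
    have := Complex.reCLM.hasFDerivAt.comp_hasDerivAt t h1
    simpa [hAφ, Function.comp_def] using this
  have hD : ∀ t : ℝ, HasDerivAt D
      (Complex.re (⟪w t, A (w t)⟫ + ⟪A (w t), w t⟫)) t := by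
    intro t
    have h1 : HasDerivAt (fun t => (⟪w t, w t⟫ : ℂ))
        (⟪w t, A (w t)⟫ + ⟪A (w t), w t⟫) t :=
      HasDerivAt.inner ℂ (hw' t) (hw' t)
    have := Complex.reCLM.hasFDerivAt.comp_hasDerivAt t h1
    simpa [Function.comp_def, hDdef] using this
  have hDpos : ∀ t : ℝ, 0 < D t := by
    intro t
    have : D t = ‖w t‖ ^ 2 := by
      rw [hDdef]
      simp; rw [← Complex.ofReal_pow, Complex.ofReal_re]
    rw [this]
    exact pow_pos (norm_pos_iff.2 (hwne t)) 2
  have hR : ∀ t : ℝ, HasDerivAt (fun t => N t / D t)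
      ((Complex.re (⟪A (w t), A (w t)⟫ + ⟪A (A (w t)), w t⟫) * D t -
        N t * Complex.re (⟪w t, A (w t)⟫ + ⟪A (w t), w t⟫)) / D t ^ 2) t :=
    fun t => (hN t).div (hD t) (hDpos t).ne'
  apply strictMono_of_deriv_pos
  intro t
  rw [(hR t).deriv]
  apply div_pos
  · -- numerator positive
    have e1 : (⟪A (A (w t)), w t⟫ : ℂ) = ⟪A (w t), A (w t)⟫ := by
      simp only [hAφ]; exact hφ (φ (w t)) (w t)
    have e2 : Complex.re (⟪w t, A (w t)⟫ : ℂ) = Complex.re ⟪A (w t), w t⟫ := by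
      rw [← inner_conj_symm]; exact Complex.conj_re _
    have e3 : Complex.re (⟪A (w t), A (w t)⟫ : ℂ) = ‖A (w t)‖ ^ 2 := by
      simp; rw [← Complex.ofReal_pow, Complex.ofReal_re]
    have e4 : D t = ‖w t‖ ^ 2 := by
      rw [hDdef]
      simp; rw [← Complex.ofReal_pow, Complex.ofReal_re]
    have e5 : N t = Complex.re ⟪A (w t), w t⟫ := by rw [hNdef, hAφ]
    have hCS := aux_strictCS φ (w t) (hwne t) (hwev t)
    rw [← hAφ] at hCS
    simp only [Complex.add_re, e1, e2, e3, e4, e5]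
    nlinarith [hCS]
  · exact pow_pos (hDpos t) 2


/-- Let `V` be a finite-dimensional complex inner product space,
`φ : V → V` self-adjoint, and `v ≠ 0` not an eigenvector of `φ`.  Then along the flow
`t ↦ e^{tφ} v` the height function `t ↦ -(1/2) ⟪φ e^{tφ}v, e^{tφ}v⟫ / ⟪e^{tφ}v, e^{tφ}v⟫`
is strictly decreasing; equivalently the Rayleigh quotient
`t ↦ ⟪φ e^{tφ}v, e^{tφ}v⟫ / ⟪e^{tφ}v, e^{tφ}v⟫` is strictly increasing. -/
theorem height_strictAnti_along_flow
    {V : Type*} [NormedAddCommGroup V] [InnerProductSpace ℂ V] [FiniteDimensional ℂ V]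
    (φ : V →ₗ[ℂ] V) (hφ : LinearMap.IsSymmetric φ) (v : V) (hv : v ≠ 0)
    (hev : ¬∃ c : ℂ, φ v = c • v) :
    StrictAnti (fun t : ℝ =>
      -(1 / 2) *
        Complex.re ⟪φ (NormedSpace.exp (t • LinearMap.toContinuousLinearMap φ) v),
            NormedSpace.exp (t • LinearMap.toContinuousLinearMap φ) v⟫ /
        Complex.re ⟪NormedSpace.exp (t • LinearMap.toContinuousLinearMap φ) v,
            NormedSpace.exp (t • LinearMap.toContinuousLinearMap φ) v⟫) ∧
    StrictMono (fun t : ℝ =>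
      Complex.re ⟪φ (NormedSpace.exp (t • LinearMap.toContinuousLinearMap φ) v),
          NormedSpace.exp (t • LinearMap.toContinuousLinearMap φ) v⟫ /
      Complex.re ⟪NormedSpace.exp (t • LinearMap.toContinuousLinearMap φ) v,
          NormedSpace.exp (t • LinearMap.toContinuousLinearMap φ) v⟫) := by
  have hmono := aux_strictMono φ hφ v hv hev
  refine ⟨?_, hmono⟩
  intro a b hab
  simp only [mul_div_assoc]
  have := hmono hab
  have hneg : (-(1 / 2) : ℝ) < 0 := by norm_num
  exact mul_lt_mul_of_neg_left this hneg
end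

section
/- Let V be a finite-dimensional complex inner product space and φ : V → V self-adjoint. Every orbit of the projective flow Φ generated by φ has limits as t → ±∞. Precisely, write v ≠ 0 as v = Σ_{ν ∈ spec(φ)} v_ν with v_ν ∈ V_ν, and set w₊ = max{ν ∈ spec(φ) : v_ν ≠ 0} and w₋ = min{ν ∈ spec(φ) : v_ν ≠ 0}. Then in ℙ(V), lim_{t→+∞} Φ(t,[v]) = [v_{w₊}] and lim_{t→−∞} Φ(t,[v]) = [v_{w₋}]. -/
open scoped LinearAlgebra.Projectivization
open Filter

variable {V : Type*} [NormedAddCommGroup V] [InnerProductSpace ℂ V] [FiniteDimensional ℂ V]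

/-- The quotient topology on complex projective space. -/
noncomputable instance instTopPV : TopologicalSpace (ℙ ℂ V) :=
  @instTopologicalSpaceQuotient _ (projectivizationSetoid ℂ V) _

theorem exp_toLinearMap_injective (ψ : V →L[ℂ] V) :
    Function.Injective (NormedSpace.exp ψ).toLinearMap := by
  letI : NormedAlgebra ℚ (V →L[ℂ] V) := .restrictScalars ℚ ℂ _
  obtain ⟨u, hu⟩ := NormedSpace.isUnit_exp ψ
  intro a b hab
  have h2 : (↑u⁻¹ * ↑u : V →L[ℂ] V) a = (↑u⁻¹ * ↑u : V →L[ℂ] V) b := by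
    simp only [ContinuousLinearMap.mul_apply]
    rw [hu]
    exact congrArg _ hab
  simpa [u.inv_mul] using h2

/-- The projective flow generated by a linear map `φ`: `Φ(t, [v]) = [e^{tφ} v]`. -/
noncomputable def projFlow (φ : V →ₗ[ℂ] V) (t : ℝ) : ℙ ℂ V → ℙ ℂ V :=
  Projectivization.map
    (NormedSpace.exp (t • LinearMap.toContinuousLinearMap φ)).toLinearMap
    (exp_toLinearMap_injective _)

private lemma exp_apply_eigen (ψ : V →L[ℂ] V) (μ : ℂ) (x : V) (hx : ψ x = μ • x) :
    NormedSpace.exp ψ x = Complex.exp μ • x := by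
  have hpow : ∀ n : ℕ, (ψ ^ n) x = μ ^ n • x := by
    intro n
    induction n with
    | zero => simp
    | succ n ih =>
        rw [pow_succ, ContinuousLinearMap.mul_apply, hx, map_smul, ih, smul_smul, pow_succ,
          mul_comm]
  have hsum := NormedSpace.expSeries_summable' (𝕂 := ℂ) ψ
  have hmap := ContinuousLinearMap.map_tsum (ContinuousLinearMap.apply ℂ V x)
    (f := fun n : ℕ => (n.factorial⁻¹ : ℂ) • ψ ^ n) hsum
  have h1 : NormedSpace.exp ψ x = ∑' n : ℕ, (n.factorial⁻¹ : ℂ) • (μ ^ n • x) := by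
    rw [NormedSpace.exp_eq_tsum ℂ]
    simpa [hpow] using hmap
  rw [h1]
  have hsumμ := NormedSpace.expSeries_summable' (𝕂 := ℂ) μ
  calc ∑' n : ℕ, (n.factorial⁻¹ : ℂ) • (μ ^ n • x)
      = ∑' n : ℕ, ((n.factorial⁻¹ : ℂ) • μ ^ n) • x := by
        simp [smul_smul]
    _ = (∑' n : ℕ, (n.factorial⁻¹ : ℂ) • μ ^ n) • x := by
        rw [hsumμ.tsum_smul_const]
    _ = Complex.exp μ • x := by
        rw [Complex.exp_eq_exp_ℂ, NormedSpace.exp_eq_tsum ℂ]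
private lemma projFlow_tendsto_aux (φ : V →ₗ[ℂ] V) (s : Finset ℝ) (c : ℝ → V)
    (hmem : ∀ ν ∈ s, c ν ∈ Module.End.eigenspace φ (ν : ℂ))
    (v : V) (hv0 : v ≠ 0) (hdecomp : v = ∑ ν ∈ s, c ν)
    (w : ℝ) (hw : w ∈ s) (hcw : c w ≠ 0) (l : Filter ℝ)
    (hlim : ∀ ν ∈ s, ν ≠ w → Tendsto (fun t : ℝ => Real.exp (t * (ν - w))) l (nhds 0)) :
    Tendsto (fun t : ℝ => projFlow φ t (Projectivization.mk ℂ v hv0)) l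
      (nhds (Projectivization.mk ℂ (c w) hcw)) := by
  set ψ := LinearMap.toContinuousLinearMap φ with hψ
  have heig : ∀ ν ∈ s, ∀ t : ℝ, (t • ψ) (c ν) = ((t : ℂ) * ν) • c ν := by
    intro ν hν t
    have h0 : φ (c ν) = (ν : ℂ) • c ν := Module.End.mem_eigenspace_iff.mp (hmem ν hν)
    rw [ContinuousLinearMap.smul_apply]
    have : ψ (c ν) = (ν : ℂ) • c ν := h0
    rw [this, smul_comm, ← Complex.coe_smul, smul_smul, mul_comm]
  have hexp : ∀ t : ℝ, NormedSpace.exp (t • ψ) v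
      = ∑ ν ∈ s, Complex.exp ((t : ℂ) * ν) • c ν := by
    intro t
    rw [hdecomp, map_sum]
    exact Finset.sum_congr rfl fun ν hν => exp_apply_eigen _ _ _ (heig ν hν t)
  set u : ℝ → V := fun t => ∑ ν ∈ s, Real.exp (t * (ν - w)) • c ν with hu
  have hrel : ∀ t : ℝ, Complex.exp ((t : ℂ) * w) • u t = NormedSpace.exp (t • ψ) v := by
    intro t
    rw [hexp, hu, Finset.smul_sum]
    refine Finset.sum_congr rfl fun ν hν => ?_
    rw [← Complex.coe_smul, smul_smul, Complex.ofReal_exp, ← Complex.exp_add]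
    congr 1
    push_cast
    ring_nf
  have hexpv_ne : ∀ t : ℝ, NormedSpace.exp (t • ψ) v ≠ 0 := by
    intro t h
    refine hv0 (exp_toLinearMap_injective (t • ψ) ?_)
    simpa using h
  have hut : ∀ t : ℝ, u t ≠ 0 := by
    intro t h
    apply hexpv_ne t
    rw [← hrel t, h, smul_zero]
  have hflow : ∀ t : ℝ, projFlow φ t (Projectivization.mk ℂ v hv0)
      = Projectivization.mk ℂ (u t) (hut t) := by
    intro t
    rw [projFlow, Projectivization.map_mk]
    rw [Projectivization.mk_eq_mk_iff']
    exact ⟨Complex.exp ((t : ℂ) * w), hrel t⟩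
  have hulim : Tendsto u l (nhds (c w)) := by
    have h1 : Tendsto u l (nhds (∑ ν ∈ s, if ν = w then c w else 0)) := by
      refine tendsto_finset_sum _ fun ν hν => ?_
      by_cases hvw : ν = w
      · subst hvw
        simp only [if_pos rfl, sub_self, mul_zero, Real.exp_zero, one_smul]
        exact tendsto_const_nhds
      · simp only [if_neg hvw]
        simpa using (hlim ν hν hvw).smul_const (c ν)
    rwa [Finset.sum_ite_eq' s w (fun _ => c w), if_pos hw] at h1
  have hq : Continuous fun x : { y : V // y ≠ 0 } => Projectivization.mk ℂ x.1 x.2 :=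
    continuous_quotient_mk'
  have hsub : Tendsto (fun t : ℝ => (⟨u t, hut t⟩ : { y : V // y ≠ 0 })) l
      (nhds ⟨c w, hcw⟩) := by
    rw [tendsto_subtype_rng]
    exact hulim
  have := (hq.tendsto ⟨c w, hcw⟩).comp hsub
  refine this.congr fun t => ?_
  exact (hflow t).symm
/-- Every orbit of the projective flow generated by a self-adjoint `φ`
has limits as `t → ±∞`: writing `v = Σ_{ν} v_ν` with `v_ν ∈ V_ν`, and letting `w₊`/`w₋` be
the largest/smallest eigenvalue with nonzero component, `Φ(t,[v]) → [v_{w₊}]` as `t → +∞`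
and `Φ(t,[v]) → [v_{w₋}]` as `t → −∞`. -/
theorem projFlow_orbit_limits
    {V : Type*} [NormedAddCommGroup V] [InnerProductSpace ℂ V] [FiniteDimensional ℂ V]
    (φ : V →ₗ[ℂ] V) (hφ : LinearMap.IsSymmetric φ)
    (s : Finset ℝ) (hs : s.Nonempty) (c : ℝ → V)
    (hmem : ∀ ν ∈ s, c ν ∈ Module.End.eigenspace φ (ν : ℂ))
    (hne : ∀ ν ∈ s, c ν ≠ 0)
    (v : V) (hv0 : v ≠ 0) (hdecomp : v = ∑ ν ∈ s, c ν) :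
    Tendsto (fun t : ℝ => projFlow φ t (Projectivization.mk ℂ v hv0)) atTop
      (nhds (Projectivization.mk ℂ (c (s.max' hs)) (hne _ (s.max'_mem hs)))) ∧
    Tendsto (fun t : ℝ => projFlow φ t (Projectivization.mk ℂ v hv0)) atBot
      (nhds (Projectivization.mk ℂ (c (s.min' hs)) (hne _ (s.min'_mem hs)))) := by
  constructor
  · refine projFlow_tendsto_aux φ s c hmem v hv0 hdecomp _ (s.max'_mem hs)
      (hne _ (s.max'_mem hs)) atTop fun ν hν hvw => ?_
    have hlt : ν - s.max' hs < 0 := sub_neg.mpr (lt_of_le_of_ne (s.le_max' ν hν) hvw)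
    exact Real.tendsto_exp_atBot.comp (tendsto_id.atTop_mul_const_of_neg hlt)
  · refine projFlow_tendsto_aux φ s c hmem v hv0 hdecomp _ (s.min'_mem hs)
      (hne _ (s.min'_mem hs)) atBot fun ν hν hvw => ?_
    have hlt : 0 < ν - s.min' hs := sub_pos.mpr (lt_of_le_of_ne (s.min'_le ν hν) (Ne.symm hvw))
    exact Real.tendsto_exp_atBot.comp (tendsto_id.atBot_mul_const hlt)
end

section
/- Let M be a compact metric space and Φ a continuous flow on M such that lim_{t→±∞} Φ(t,x) exists for every x ∈ M. Then for any closed invariant subset A ⊆ M: (i) W⁺(A) = ⋃_{x ∈ A_fix} W⁺(x) and W⁻(A) = ⋃_{x ∈ A_fix} W⁻(x); (ii) the set of fixed points contained in W⁺(A) equals A_fix, and likewise the set of fixed points contained in W⁻(A) equals A_fix. -/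
open Filter

variable {M : Type*} [MetricSpace M] [CompactSpace M]

/-- The set of fixed points of a flow. -/
def fixedPoints (Φ : Flow ℝ M) : Set M := {x : M | ∀ t : ℝ, Φ t x = x}

/-- The stable set `W⁺(A) = {x | dist(Φ(t,x), A) → 0 as t → +∞}` of a set `A`
(stated with the extended distance, so that `W⁺(∅) = ∅` as in the paper). -/
def wPlus (Φ : Flow ℝ M) (A : Set M) : Set M :=
  {x : M | Tendsto (fun t : ℝ => EMetric.infEdist (Φ t x) A) atTop (nhds 0)}

/-- The unstable set `W⁻(A) = {x | dist(Φ(t,x), A) → 0 as t → −∞}` of a set `A`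
(stated with the extended distance, so that `W⁻(∅) = ∅` as in the paper). -/
def wMinus (Φ : Flow ℝ M) (A : Set M) : Set M :=
  {x : M | Tendsto (fun t : ℝ => EMetric.infEdist (Φ t x) A) atBot (nhds 0)}

/-- Every flow line has a sink and a source: `lim_{t→±∞} Φ(t,x)` exists for all `x`. -/
def allOrbitsConverge (Φ : Flow ℝ M) : Prop :=
  ∀ x : M, (∃ y : M, Tendsto (fun t : ℝ => Φ t x) atTop (nhds y)) ∧
    (∃ y : M, Tendsto (fun t : ℝ => Φ t x) atBot (nhds y))

/-- An attractor: a compact invariant set admitting a neighborhood `U` with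
`Φ(t, cl U) ⊆ int U` for all `t > 0` and `A = ⋂_{t ≥ 0} Φ(t, U)`. -/
def IsAttractor (Φ : ℝ → M → M) (A : Set M) : Prop :=
  IsCompact A ∧ (∀ t : ℝ, Φ t '' A = A) ∧
    ∃ U : Set M, A ⊆ interior U ∧ (∀ t > (0 : ℝ), Φ t '' closure U ⊆ interior U) ∧
      A = ⋂ t ∈ Set.Ici (0 : ℝ), Φ t '' U

section Aux
variable {M : Type*} [MetricSpace M]

private lemma wplus_single_iff (Φ : Flow ℝ M) (l : Filter ℝ) {x y : M} :
    Tendsto (fun t : ℝ => EMetric.infEdist (Φ t x) {y}) l (nhds 0) ↔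
      Tendsto (fun t : ℝ => Φ t x) l (nhds y) := by
  simp only [EMetric.infEdist, Metric.infEDist_singleton]
  exact (tendsto_iff_edist_tendsto_0).symm

private lemma limit_fixed (Φ : Flow ℝ M) (l : Filter ℝ) [l.NeBot]
    (hl : ∀ s : ℝ, Tendsto (fun t => s + t) l l) {x y : M}
    (h : Tendsto (fun t : ℝ => Φ t x) l (nhds y)) : y ∈ fixedPoints Φ := by
  intro s
  have h1 : Tendsto (fun t : ℝ => Φ s (Φ t x)) l (nhds (Φ s y)) :=
    ((Φ.continuous_toFun s).tendsto y).comp h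
  have h2 : Tendsto (fun t : ℝ => Φ (s + t) x) l (nhds y) := h.comp (hl s)
  have : (fun t : ℝ => Φ (s + t) x) = fun t : ℝ => Φ s (Φ t x) := by
    funext t; exact Φ.map_add s t x
  rw [this] at h2
  exact tendsto_nhds_unique h1 h2

private lemma wGen (Φ : Flow ℝ M) (l : Filter ℝ) [l.NeBot]
    (hl : ∀ s : ℝ, Tendsto (fun t => s + t) l l)
    (hconv : ∀ x : M, ∃ y : M, Tendsto (fun t : ℝ => Φ t x) l (nhds y))
    (A : Set M) (hA : IsClosed A) :
    {x : M | Tendsto (fun t : ℝ => EMetric.infEdist (Φ t x) A) l (nhds 0)} =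
      ⋃ y ∈ A ∩ fixedPoints Φ,
        {x : M | Tendsto (fun t : ℝ => EMetric.infEdist (Φ t x) {y}) l (nhds 0)} := by
  ext x
  simp only [Set.mem_setOf_eq, Set.mem_iUnion, Set.mem_inter_iff, exists_prop]
  constructor
  · intro hx
    obtain ⟨y, hy⟩ := hconv x
    have hyA : y ∈ A := by
      have h1 : Tendsto (fun t : ℝ => EMetric.infEdist (Φ t x) A) l
          (nhds (EMetric.infEdist y A)) :=
        (EMetric.continuous_infEdist.tendsto y).comp hy
      have := tendsto_nhds_unique h1 hx
      exact (EMetric.mem_iff_infEdist_zero_of_closed hA).2 this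
    exact ⟨y, ⟨hyA, limit_fixed Φ l hl hy⟩, (wplus_single_iff Φ l).2 hy⟩
  · rintro ⟨y, ⟨hyA, -⟩, hx⟩
    have hy : Tendsto (fun t : ℝ => Φ t x) l (nhds y) := (wplus_single_iff Φ l).1 hx
    refine tendsto_of_tendsto_of_tendsto_of_le_of_le tendsto_const_nhds
      ((wplus_single_iff Φ l).2 hy) (fun t => zero_le) (fun t => ?_)
    simpa only [EMetric.infEdist, Metric.infEDist_singleton] using
      EMetric.infEdist_le_edist_of_mem (x := Φ t x) hyA

private lemma fixGen (Φ : Flow ℝ M) (l : Filter ℝ) [l.NeBot]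
    (A : Set M) (hA : IsClosed A) :
    {x : M | Tendsto (fun t : ℝ => EMetric.infEdist (Φ t x) A) l (nhds 0)} ∩ fixedPoints Φ =
      A ∩ fixedPoints Φ := by
  ext m
  simp only [Set.mem_inter_iff, Set.mem_setOf_eq]
  constructor
  · rintro ⟨hm, hfix⟩
    refine ⟨?_, hfix⟩
    have : (fun t : ℝ => EMetric.infEdist (Φ t m) A) = fun _ => EMetric.infEdist m A := by
      funext t; rw [hfix t]
    rw [this] at hm
    exact (EMetric.mem_iff_infEdist_zero_of_closed hA).2 (tendsto_nhds_unique hm tendsto_const_nhds).symm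
  · rintro ⟨hmA, hfix⟩
    refine ⟨?_, hfix⟩
    have : (fun t : ℝ => EMetric.infEdist (Φ t m) A) = fun _ => (0 : ENNReal) := by
      funext t; rw [hfix t]
      exact EMetric.infEdist_zero_of_mem hmA
    rw [this]; exact tendsto_const_nhds
end Aux

/-- If every flow line of a continuous flow on a compact metric space
has a sink and a source, then for any closed invariant `A ⊆ M`:
(i) `W^±(A) = ⋃_{x ∈ A_fix} W^±(x)`; (ii) the fixed points in `W^±(A)` are exactly `A_fix`. -/
theorem stable_unstable_of_closed_invariant
    {M : Type*} [MetricSpace M] [CompactSpace M] (Φ : Flow ℝ M)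
    (hconv : allOrbitsConverge Φ)
    (A : Set M) (hA : IsClosed A) (hinv : ∀ t : ℝ, Φ t '' A = A) :
    (wPlus Φ A = ⋃ x ∈ A ∩ fixedPoints Φ, wPlus Φ {x}) ∧
    (wMinus Φ A = ⋃ x ∈ A ∩ fixedPoints Φ, wMinus Φ {x}) ∧
    (wPlus Φ A ∩ fixedPoints Φ = A ∩ fixedPoints Φ) ∧
    (wMinus Φ A ∩ fixedPoints Φ = A ∩ fixedPoints Φ) := by
  refine ⟨?_, ?_, ?_, ?_⟩
  · exact wGen Φ atTop (fun s => tendsto_atTop_add_const_left atTop s tendsto_id)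
      (fun x => (hconv x).1) A hA
  · exact wGen Φ atBot (fun s => tendsto_atBot_add_const_left atBot s tendsto_id)
      (fun x => (hconv x).2) A hA
  · exact fixGen Φ atTop A hA
  · exact fixGen Φ atBot A hA
end

section
/- Let M be a compact metric space and Φ a continuous flow on M such that lim_{t→±∞} Φ(t,x) exists for every x ∈ M. Let A be an attractor for Φ and A* = M ∖ W⁺(A) its dual repellor. Then A* = ⋃_{x ∈ A*_fix} W⁺(x) and this set is closed, and A = ⋃_{x ∈ A_fix} W⁻(x) and this set is closed. -/
open Filter

set_option linter.unusedSectionVars false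

variable {M : Type*} [MetricSpace M] [CompactSpace M]

section Aux

variable (Φ : Flow ℝ M)

lemma flow_cont_x (t : ℝ) : Continuous (fun x : M => Φ t x) :=
  Φ.continuous continuous_const continuous_id

lemma wPlus_singleton_iff {x y : M} :
    y ∈ wPlus Φ {x} ↔ Tendsto (fun t : ℝ => Φ t y) atTop (nhds x) := by
  simp only [wPlus, Set.mem_setOf_eq, EMetric.infEdist, EMetric.infEdist_singleton]
  exact tendsto_iff_edist_tendsto_0.symm

lemma wMinus_singleton_iff {x y : M} :
    y ∈ wMinus Φ {x} ↔ Tendsto (fun t : ℝ => Φ t y) atBot (nhds x) := by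
  simp only [wMinus, Set.mem_setOf_eq, EMetric.infEdist, EMetric.infEdist_singleton]
  exact tendsto_iff_edist_tendsto_0.symm

lemma limit_fixed_atTop {y z : M} (h : Tendsto (fun t : ℝ => Φ t y) atTop (nhds z)) :
    z ∈ fixedPoints Φ := by
  intro s
  have h1 : Tendsto (fun t : ℝ => Φ s (Φ t y)) atTop (nhds (Φ s z)) :=
    ((flow_cont_x Φ s).tendsto z).comp h
  have h2 : Tendsto (fun t : ℝ => Φ (s + t) y) atTop (nhds z) :=
    h.comp (tendsto_atTop_add_const_left atTop s tendsto_id)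
  have heq : (fun t : ℝ => Φ (s + t) y) = fun t : ℝ => Φ s (Φ t y) :=
    funext fun t => Φ.map_add s t y
  rw [heq] at h2
  exact tendsto_nhds_unique h1 h2

lemma limit_fixed_atBot {y z : M} (h : Tendsto (fun t : ℝ => Φ t y) atBot (nhds z)) :
    z ∈ fixedPoints Φ := by
  intro s
  have h1 : Tendsto (fun t : ℝ => Φ s (Φ t y)) atBot (nhds (Φ s z)) :=
    ((flow_cont_x Φ s).tendsto z).comp h
  have h2 : Tendsto (fun t : ℝ => Φ (s + t) y) atBot (nhds z) :=
    h.comp (tendsto_atBot_add_const_left atBot s tendsto_id)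
  have heq : (fun t : ℝ => Φ (s + t) y) = fun t : ℝ => Φ s (Φ t y) :=
    funext fun t => Φ.map_add s t y
  rw [heq] at h2
  exact tendsto_nhds_unique h1 h2

/-- If the orbit shifted by `t` is attracted to `A`, so is the original point. -/
lemma wPlus_shift {A : Set M} {y : M} (t : ℝ) (h : Φ t y ∈ wPlus Φ A) :
    y ∈ wPlus Φ A := by
  have h2 : Tendsto
      (fun s : ℝ => EMetric.infEdist (Φ (s - t) (Φ t y)) A) atTop (nhds 0) :=
    h.comp (tendsto_atTop_add_const_right atTop (-t) tendsto_id)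
  have heq : (fun s : ℝ => EMetric.infEdist (Φ (s - t) (Φ t y)) A)
      = fun s : ℝ => EMetric.infEdist (Φ s y) A := by
    funext s
    rw [← Φ.map_add]
    norm_num
  rwa [heq] at h2

/-- If the orbit converges to a point of `A`, the point is in `wPlus Φ A`. -/
lemma wPlus_of_tendsto_mem {A : Set M} {y z : M} (hzA : z ∈ A)
    (h : Tendsto (fun t : ℝ => Φ t y) atTop (nhds z)) : y ∈ wPlus Φ A := by
  have h0 : Tendsto (fun t : ℝ => edist (Φ t y) z) atTop (nhds 0) :=
    tendsto_iff_edist_tendsto_0.mp h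
  exact tendsto_of_tendsto_of_tendsto_of_le_of_le tendsto_const_nhds h0
    (fun t => zero_le) (fun t => EMetric.infEdist_le_edist_of_mem hzA)

lemma wMinus_of_tendsto_mem {A : Set M} {y z : M} (hzA : z ∈ A)
    (h : Tendsto (fun t : ℝ => Φ t y) atBot (nhds z)) : y ∈ wMinus Φ A := by
  have h0 : Tendsto (fun t : ℝ => edist (Φ t y) z) atBot (nhds 0) :=
    tendsto_iff_edist_tendsto_0.mp h
  exact tendsto_of_tendsto_of_tendsto_of_le_of_le tendsto_const_nhds h0
    (fun t => zero_le) (fun t => EMetric.infEdist_le_edist_of_mem hzA)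

end Aux

/-- If every flow line has a sink and a source and `A` is an attractor
with dual repellor `A* = M ∖ W⁺(A)`, then `A* = ⋃_{x ∈ A*_fix} W⁺(x)` is closed and
`A = ⋃_{x ∈ A_fix} W⁻(x)` is closed. -/
theorem attractor_repellor_unions
    {M : Type*} [MetricSpace M] [CompactSpace M] (Φ : Flow ℝ M)
    (hconv : allOrbitsConverge Φ)
    (A : Set M) (hA : IsAttractor (fun t x => Φ t x) A) :
    (Set.univ \ wPlus Φ A
        = ⋃ x ∈ (Set.univ \ wPlus Φ A) ∩ fixedPoints Φ, wPlus Φ {x}) ∧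
    IsClosed (Set.univ \ wPlus Φ A) ∧
    (A = ⋃ x ∈ A ∩ fixedPoints Φ, wMinus Φ {x}) ∧
    IsClosed A := by
  obtain ⟨hAcomp, hInv, U, hAU, hU, hAeq⟩ := hA
  have hAclosed : IsClosed A := hAcomp.isClosed
  -- a uniform separation between A and the complement of U
  obtain ⟨δ, hδpos, hδ⟩ :=
    hAcomp.exists_thickening_subset_open isOpen_interior hAU
  have hδ0 : (0 : ENNReal) < ENNReal.ofReal δ := ENNReal.ofReal_pos.2 hδpos
  -- every point of the closure of U is attracted to A
  have clU_wPlus : ∀ y ∈ closure U, y ∈ wPlus Φ A := by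
    intro y hy
    obtain ⟨z, hz⟩ := (hconv y).1
    have hzfix : z ∈ fixedPoints Φ := limit_fixed_atTop Φ hz
    have hmem : ∀ t > (0 : ℝ), Φ t y ∈ interior U := fun t ht => hU t ht ⟨y, hy, rfl⟩
    have hzU : z ∈ closure U := by
      refine isClosed_closure.mem_of_tendsto hz ?_
      filter_upwards [eventually_gt_atTop (0 : ℝ)] with t ht
      exact subset_closure (interior_subset (hmem t ht))
    have hz1 : z ∈ U := by
      have : Φ (1 : ℝ) z ∈ interior U := hU 1 one_pos ⟨z, hzU, rfl⟩
      rw [hzfix 1] at this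
      exact interior_subset this
    have hzA : z ∈ A := by
      rw [hAeq]
      refine Set.mem_iInter₂.2 fun t ht => ⟨z, hz1, hzfix t⟩
    exact wPlus_of_tendsto_mem Φ hzA hz
  -- wPlus Φ A is the union of the preimages of interior U, hence open
  have hWPeq : wPlus Φ A = ⋃ t : ℝ, (fun y : M => Φ t y) ⁻¹' interior U := by
    apply Set.Subset.antisymm
    · intro y hy
      have hev : ∀ᶠ t : ℝ in atTop,
          EMetric.infEdist (Φ t y) A < ENNReal.ofReal δ :=
        hy (Iio_mem_nhds hδ0)
      obtain ⟨t, ht⟩ := hev.exists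
      refine Set.mem_iUnion.2 ⟨t, ?_⟩
      exact hδ (Metric.mem_thickening_iff_infEdist_lt.2 ht)
    · intro y hy
      obtain ⟨t, ht⟩ := Set.mem_iUnion.1 hy
      exact wPlus_shift Φ t (clU_wPlus _ (subset_closure (interior_subset ht)))
  have hWPopen : IsOpen (wPlus Φ A) := by
    rw [hWPeq]
    exact isOpen_iUnion fun t => (flow_cont_x Φ t).isOpen_preimage _ isOpen_interior
  -- a fixed point is in wPlus Φ A iff it is in A
  have hfix_iff : ∀ z ∈ fixedPoints Φ, (z ∈ wPlus Φ A ↔ z ∈ A) := by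
    intro z hzfix
    constructor
    · intro hz
      have hconst : (fun t : ℝ => EMetric.infEdist (Φ t z) A)
          = fun _ : ℝ => EMetric.infEdist z A := funext fun t => by rw [hzfix t]
      rw [wPlus, Set.mem_setOf_eq, hconst] at hz
      have : EMetric.infEdist z A = 0 := tendsto_nhds_unique tendsto_const_nhds hz
      exact (EMetric.mem_iff_infEdist_zero_of_closed hAclosed).2 this
    · intro hz
      have hconst : (fun t : ℝ => EMetric.infEdist (Φ t z) A)
          = fun _ : ℝ => (0 : ENNReal) := funext fun t => by
        rw [hzfix t]; exact EMetric.infEdist_zero_of_mem hz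
      rw [wPlus, Set.mem_setOf_eq, hconst]
      exact tendsto_const_nhds
  -- backward attraction: wMinus Φ A ⊆ A
  have hWm : wMinus Φ A ⊆ A := by
    intro y hy
    by_contra hyA
    have hex : ∃ t0 ∈ Set.Ici (0 : ℝ), y ∉ Φ t0 '' U := by
      by_contra h
      push_neg at h
      exact hyA (hAeq ▸ Set.mem_iInter₂.2 h)
    obtain ⟨t0, _, hyU⟩ := hex
    have key : ∀ s : ℝ, s < -t0 →
        ENNReal.ofReal δ ≤ EMetric.infEdist (Φ s y) A := by
      intro s hs
      have hnot : Φ s y ∉ interior U := by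
        intro hmem
        apply hyU
        have h1 : Φ (-t0 - s) (Φ s y) ∈ interior U :=
          hU (-t0 - s) (by linarith) ⟨Φ s y, subset_closure (interior_subset hmem), rfl⟩
        rw [← Φ.map_add] at h1
        have h2 : (-t0 - s + s) = -t0 := by ring
        rw [h2] at h1
        refine ⟨Φ (-t0) y, interior_subset h1, ?_⟩
        rw [← Φ.map_add]
        norm_num
      by_contra hlt
      push_neg at hlt
      exact hnot (hδ (Metric.mem_thickening_iff_infEdist_lt.2 hlt))
    have hev1 : ∀ᶠ s : ℝ in atBot,
        EMetric.infEdist (Φ s y) A < ENNReal.ofReal δ := hy (Iio_mem_nhds hδ0)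
    have hev2 : ∀ᶠ s : ℝ in atBot, s < -t0 := eventually_lt_atBot (-t0)
    obtain ⟨s, hs1, hs2⟩ := (hev1.and hev2).exists
    exact absurd (key s hs2) (not_le.2 hs1)
  refine ⟨?_, ?_, ?_, hAclosed⟩
  · -- A* = ⋃_{x ∈ A*_fix} W⁺(x)
    apply Set.Subset.antisymm
    · intro y hy
      obtain ⟨z, hz⟩ := (hconv y).1
      have hzfix : z ∈ fixedPoints Φ := limit_fixed_atTop Φ hz
      have hznot : z ∉ wPlus Φ A := by
        intro hzw
        have hzA : z ∈ A := (hfix_iff z hzfix).1 hzw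
        exact hy.2 (wPlus_of_tendsto_mem Φ hzA hz)
      exact Set.mem_biUnion ⟨⟨Set.mem_univ z, hznot⟩, hzfix⟩
        ((wPlus_singleton_iff Φ).2 hz)
    · intro y hy
      simp only [Set.mem_iUnion, exists_prop] at hy
      obtain ⟨x, ⟨⟨-, hxnot⟩, hxfix⟩, hyx⟩ := hy
      refine ⟨Set.mem_univ y, fun hyw => ?_⟩
      have hx : Tendsto (fun t : ℝ => Φ t y) atTop (nhds x) :=
        (wPlus_singleton_iff Φ).1 hyx
      have h1 : Tendsto (fun t : ℝ => EMetric.infEdist (Φ t y) A) atTop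
          (nhds (EMetric.infEdist x A)) :=
        (EMetric.continuous_infEdist.tendsto x).comp hx
      have h0 : EMetric.infEdist x A = 0 := tendsto_nhds_unique h1 hyw
      have hxA : x ∈ A := (EMetric.mem_iff_infEdist_zero_of_closed hAclosed).2 h0
      exact hxnot ((hfix_iff x hxfix).2 hxA)
  · -- A* closed
    rw [← Set.compl_eq_univ_diff]
    exact hWPopen.isClosed_compl
  · -- A = ⋃_{x ∈ A_fix} W⁻(x)
    apply Set.Subset.antisymm
    · intro y hy
      obtain ⟨z, hz⟩ := (hconv y).2
      have hzfix : z ∈ fixedPoints Φ := limit_fixed_atBot Φ hz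
      have horbA : ∀ t : ℝ, Φ t y ∈ A := fun t => (hInv t) ▸ ⟨y, hy, rfl⟩
      have hzA : z ∈ A := hAclosed.mem_of_tendsto hz (Eventually.of_forall horbA)
      exact Set.mem_biUnion ⟨hzA, hzfix⟩ ((wMinus_singleton_iff Φ).2 hz)
    · intro y hy
      simp only [Set.mem_iUnion, exists_prop] at hy
      obtain ⟨x, ⟨hxA, _⟩, hyx⟩ := hy
      exact hWm (wMinus_of_tendsto_mem Φ hxA ((wMinus_singleton_iff Φ).1 hyx))
end

section
/- Let M be a compact metric space and Φ a continuous flow on M such that lim_{t→±∞} Φ(t,x) exists for every x ∈ M. Let A be an attractor for Φ and A* = M ∖ W⁺(A) its dual repellor. Then M is the disjoint union M = A ∪ (W⁺(A) ∩ W⁻(A*)) ∪ A*: the three sets are pairwise disjoint and cover M. -/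
open Filter

variable {M : Type*} [MetricSpace M] [CompactSpace M]

section Aux

omit [CompactSpace M] in
lemma flow_apply_continuous (Φ : Flow ℝ M) (s : ℝ) : Continuous fun x : M => Φ s x :=
  Φ.continuous continuous_const continuous_id

/-- A limit of an orbit at `atBot` or `atTop` is a fixed point. -/
lemma fixed_of_orbit_tendsto (Φ : Flow ℝ M) {x y : M} {l : Filter ℝ} [l.NeBot]
    (hl : ∀ s : ℝ, Tendsto (fun t : ℝ => s + t) l l)
    (h : Tendsto (fun t : ℝ => Φ t x) l (nhds y)) (s : ℝ) : Φ s y = y := by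
  have h1 : Tendsto (fun t : ℝ => Φ s (Φ t x)) l (nhds (Φ s y)) :=
    (((flow_apply_continuous Φ s).tendsto y).comp h)
  have h2 : Tendsto (fun t : ℝ => Φ (s + t) x) l (nhds y) := h.comp (hl s)
  have heq : (fun t : ℝ => Φ (s + t) x) = fun t : ℝ => Φ s (Φ t x) :=
    funext fun t => Φ.map_add s t x
  rw [heq] at h2
  exact tendsto_nhds_unique h1 h2

end Aux

/-- If every flow line has a sink and a source and `A` is an attractor
with dual repellor `A* = M ∖ W⁺(A)`, then `M = A ∪ (W⁺(A) ∩ W⁻(A*)) ∪ A*` is a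
disjoint union. -/
theorem attractor_repellor_decomposition
    {M : Type*} [MetricSpace M] [CompactSpace M] (Φ : Flow ℝ M)
    (hconv : allOrbitsConverge Φ)
    (A : Set M) (hA : IsAttractor (fun t x => Φ t x) A) :
    (A ∪ (wPlus Φ A ∩ wMinus Φ (Set.univ \ wPlus Φ A)) ∪ (Set.univ \ wPlus Φ A)
        = Set.univ) ∧
    Disjoint A (wPlus Φ A ∩ wMinus Φ (Set.univ \ wPlus Φ A)) ∧
    Disjoint A (Set.univ \ wPlus Φ A) ∧
    Disjoint (wPlus Φ A ∩ wMinus Φ (Set.univ \ wPlus Φ A)) (Set.univ \ wPlus Φ A) := by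
  obtain ⟨hAcomp, hAinv, U, hAU, htrap, hAeq⟩ := hA
  -- U is forward invariant
  have invU : ∀ r : ℝ, 0 ≤ r → ∀ u ∈ U, Φ r u ∈ U := by
    intro r hr u hu
    rcases hr.eq_or_lt with h | h
    · rw [← h, Φ.map_zero_apply]; exact hu
    · exact interior_subset (htrap r h ⟨u, subset_closure hu, rfl⟩)
  -- if the backward orbit of x eventually enters U then x ∈ A
  have xinA : ∀ x : M, (∀ᶠ t : ℝ in atBot, Φ t x ∈ U) → x ∈ A := by
    intro x hx
    rw [hAeq]
    refine Set.mem_iInter₂.2 fun s hs => ?_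
    obtain ⟨b, hb⟩ := eventually_atBot.1 hx
    set t : ℝ := min b (-s) with ht
    have htb : Φ t x ∈ U := hb t (min_le_left _ _)
    have hts : (0 : ℝ) ≤ -t - s := by
      have := min_le_right b (-s); simp only [ht]; linarith
    refine ⟨Φ (-t - s) (Φ t x), invU _ hts _ htb, ?_⟩
    show Φ s (Φ (-t - s) (Φ t x)) = x
    rw [← Φ.map_add, ← Φ.map_add]
    have : s + (-t - s) + t = 0 := by ring
    rw [this, Φ.map_zero_apply]
  -- points of U converge forward to A
  have UsubW : U ⊆ wPlus Φ A := by
    intro u hu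
    obtain ⟨⟨y, hy⟩, -⟩ := hconv u
    have hyA : y ∈ A := by
      rw [hAeq]
      refine Set.mem_iInter₂.2 fun s hs => ?_
      have hclos : y ∈ closure ((fun z : M => Φ (s + 1) z) '' U) := by
        refine mem_closure_of_tendsto hy ?_
        filter_upwards [eventually_ge_atTop (s + 1)] with t htge
        refine ⟨Φ (t - (s + 1)) u, invU _ (by linarith) _ hu, ?_⟩
        show Φ (s + 1) (Φ (t - (s + 1)) u) = Φ t u
        rw [← Φ.map_add]
        norm_num
      have hcpt : IsCompact ((fun z : M => Φ (s + 1) z) '' closure U) :=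
        (isClosed_closure.isCompact).image (flow_apply_continuous Φ (s + 1))
      have h1 : closure ((fun z : M => Φ (s + 1) z) '' U)
          ⊆ (fun z : M => Φ (s + 1) z) '' closure U :=
        closure_minimal (Set.image_mono subset_closure) hcpt.isClosed
      have h2 : (fun z : M => Φ (s + 1) z) '' closure U ⊆ (fun x : M => Φ s x) '' U := by
        rintro z ⟨w, hw, rfl⟩
        refine ⟨Φ 1 w, interior_subset (htrap 1 one_pos ⟨w, hw, rfl⟩), ?_⟩
        show Φ s (Φ 1 w) = Φ (s + 1) w
        rw [← Φ.map_add]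
      exact h2 (h1 hclos)
    have hlim : Tendsto (fun t : ℝ => EMetric.infEdist (Φ t u) A) atTop
        (nhds (EMetric.infEdist y A)) :=
      ((EMetric.continuous_infEdist.tendsto y).comp hy)
    rwa [show EMetric.infEdist y A = 0 from EMetric.infEdist_zero_of_mem hyA] at hlim
  have AsubW : A ⊆ wPlus Φ A := fun a ha => UsubW (interior_subset (hAU ha))
  have AsubIntW : A ⊆ interior (wPlus Φ A) :=
    fun a ha => interior_mono UsubW (interior_maximal interior_subset isOpen_interior (hAU ha))
  -- A is disjoint from W⁻(A*)
  have AdisjWm : ∀ a ∈ A, a ∉ wMinus Φ (Set.univ \ wPlus Φ A) := by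
    intro a ha hm
    obtain ⟨-, y, hy⟩ := hconv a
    have hyA : y ∈ A := by
      refine hAcomp.isClosed.mem_of_tendsto hy (Eventually.of_forall fun t => ?_)
      rw [← hAinv t]
      exact Set.mem_image_of_mem _ ha
    have h1 : Tendsto (fun t : ℝ => EMetric.infEdist (Φ t a) (Set.univ \ wPlus Φ A)) atBot
        (nhds (EMetric.infEdist y (Set.univ \ wPlus Φ A))) :=
      ((EMetric.continuous_infEdist.tendsto y).comp hy)
    have h0 : EMetric.infEdist y (Set.univ \ wPlus Φ A) = 0 := tendsto_nhds_unique h1 hm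
    have hycl : y ∈ closure (Set.univ \ wPlus Φ A) :=
      EMetric.mem_closure_iff_infEdist_zero.2 h0
    rw [← Set.compl_eq_univ_diff, closure_compl] at hycl
    exact hycl (AsubIntW hyA)
  refine ⟨?_, ?_, ?_, ?_⟩
  · -- covering
    refine Set.eq_univ_of_forall fun x => ?_
    by_cases hxA : x ∈ A
    · exact Or.inl (Or.inl hxA)
    by_cases hxW : x ∈ wPlus Φ A
    · refine Or.inl (Or.inr ⟨hxW, ?_⟩)
      obtain ⟨-, y, hy⟩ := hconv x
      have hfix : ∀ s : ℝ, Φ s y = y :=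
        fixed_of_orbit_tendsto Φ (fun s => tendsto_atBot_add_const_left atBot s tendsto_id) hy
      have hyW : y ∉ wPlus Φ A := by
        intro hyW
        have heq : (fun t : ℝ => EMetric.infEdist (Φ t y) A)
            = fun _ : ℝ => EMetric.infEdist y A := funext fun t => by rw [hfix t]
        have hyW2 : Tendsto (fun t : ℝ => EMetric.infEdist (Φ t y) A) atTop (nhds 0) := hyW
        rw [heq] at hyW2
        have h0 : EMetric.infEdist y A = 0 := tendsto_nhds_unique tendsto_const_nhds hyW2
        have hyA : y ∈ A := by
          rw [← hAcomp.isClosed.closure_eq]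
          exact EMetric.mem_closure_iff_infEdist_zero.2 h0
        have hev : ∀ᶠ t : ℝ in atBot, Φ t x ∈ U := by
          filter_upwards [hy (isOpen_interior.mem_nhds (hAU hyA))] with t h
          exact interior_subset h
        exact hxA (xinA x hev)
      have hyS : y ∈ Set.univ \ wPlus Φ A := ⟨Set.mem_univ y, hyW⟩
      have hlim : Tendsto (fun t : ℝ => EMetric.infEdist (Φ t x) (Set.univ \ wPlus Φ A)) atBot
          (nhds (EMetric.infEdist y (Set.univ \ wPlus Φ A))) :=
        ((EMetric.continuous_infEdist.tendsto y).comp hy)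
      rwa [show EMetric.infEdist y (Set.univ \ wPlus Φ A) = 0 from
        EMetric.infEdist_zero_of_mem hyS] at hlim
    · exact Or.inr ⟨Set.mem_univ x, hxW⟩
  · exact Set.disjoint_left.2 fun a ha hm => AdisjWm a ha hm.2
  · exact Set.disjoint_left.2 fun a ha hm => hm.2 (AsubW ha)
  · exact Set.disjoint_left.2 fun x hx hm => hm.2 hx.1
end

section
/- Let A be a complete normed unital ℝ-algebra, X, Y ∈ A and c ∈ ℝ with XY − YX = c·Y. Then for every t ∈ ℝ, exp(tX)·exp(Y)·exp(−tX) = exp(e^{tc}·Y). In particular, if c < 0 then exp(tX)·exp(Y)·exp(−tX) converges to the identity 1 as t → +∞. -/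
open Filter Nat

lemma exp_mul_of_semiconj
    {A : Type*} [NormedRing A] [NormedAlgebra ℝ A] [CompleteSpace A]
    (a b Y : A) (h : a * Y = Y * b) :
    NormedSpace.exp a * Y = Y * NormedSpace.exp b := by
  have hn : ∀ n : ℕ, a ^ n * Y = Y * b ^ n := by
    intro n
    induction n with
    | zero => simp
    | succ n ih =>
      rw [pow_succ, pow_succ, mul_assoc, h, ← mul_assoc, ih, mul_assoc]
  have hsa := NormedSpace.expSeries_summable' (𝕂 := ℝ) a
  have hsb := NormedSpace.expSeries_summable' (𝕂 := ℝ) b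
  simp only [NormedSpace.exp_eq_tsum ℝ]
  calc (∑' n : ℕ, (n !⁻¹ : ℝ) • a ^ n) * Y
      = ∑' n : ℕ, ((n !⁻¹ : ℝ) • a ^ n) * Y := (hsa.tsum_mul_right Y).symm
    _ = ∑' n : ℕ, Y * ((n !⁻¹ : ℝ) • b ^ n) := by
        congr 1; ext n
        rw [smul_mul_assoc, hn n, mul_smul_comm]
    _ = Y * ∑' n : ℕ, (n !⁻¹ : ℝ) • b ^ n := hsb.tsum_mul_left Y

/-- In a real Banach algebra, if `XY − YX = c • Y` then
`exp(tX) exp(Y) exp(−tX) = exp(e^{tc} • Y)` for all `t ∈ ℝ`; in particular for `c < 0`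
the conjugates `exp(tX) exp(Y) exp(−tX)` tend to `1` as `t → +∞`. -/
theorem exp_conj_of_commutator_smul
    {A : Type*} [NormedRing A] [NormedAlgebra ℝ A] [CompleteSpace A]
    (X Y : A) (c : ℝ) (h : X * Y - Y * X = c • Y) :
    (∀ t : ℝ,
      NormedSpace.exp (t • X) * NormedSpace.exp Y * NormedSpace.exp (-(t • X))
        = NormedSpace.exp (Real.exp (t * c) • Y)) ∧
    (c < 0 →
      Tendsto
        (fun t : ℝ =>
          NormedSpace.exp (t • X) * NormedSpace.exp Y * NormedSpace.exp (-(t • X)))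
        atTop (nhds 1)) := by
  let +nondep : NormedAlgebra ℚ A := .restrictScalars ℚ ℝ A
  have key : ∀ t : ℝ,
      NormedSpace.exp (t • X) * NormedSpace.exp Y * NormedSpace.exp (-(t • X))
        = NormedSpace.exp (Real.exp (t * c) • Y) := by
    intro t
    -- the unit exp(t•X)
    have hmul : NormedSpace.exp (t • X) * NormedSpace.exp (-(t • X)) = 1 := by
      rw [← NormedSpace.exp_add_of_commute (Commute.neg_right (Commute.refl _)),
        add_neg_cancel, NormedSpace.exp_zero]
    have hmul' : NormedSpace.exp (-(t • X)) * NormedSpace.exp (t • X) = 1 := by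
      rw [← NormedSpace.exp_add_of_commute (Commute.neg_left (Commute.refl _)),
        neg_add_cancel, NormedSpace.exp_zero]
    set u : Aˣ := ⟨NormedSpace.exp (t • X), NormedSpace.exp (-(t • X)), hmul, hmul'⟩
    -- semiconjugation relation
    have hsemi : (t • X) * Y = Y * (t • X + (t * c) • 1) := by
      have hXY : X * Y = Y * X + c • Y := by
        have := h; linear_combination (norm := noncomm_ring) this
      rw [smul_mul_assoc, hXY, mul_add, mul_smul_comm, mul_smul_comm, mul_one]
      module
    have hexp := exp_mul_of_semiconj (t • X) (t • X + (t * c) • 1) Y hsemi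
    -- exp(t•X + (t*c)•1) = Real.exp (t*c) • exp(t•X)
    have hsplit : NormedSpace.exp (t • X + (t * c) • 1)
        = Real.exp (t * c) • NormedSpace.exp (t • X) := by
      rw [NormedSpace.exp_add_of_commute]
      · have h1 : NormedSpace.exp ((t * c) • (1 : A)) = Real.exp (t * c) • 1 := by
          have : ((t * c) • (1 : A)) = algebraMap ℝ A (t * c) := by
            simp [Algebra.algebraMap_eq_smul_one]
          rw [this, ← NormedSpace.algebraMap_exp_comm, ← Real.exp_eq_exp_ℝ,
            Algebra.algebraMap_eq_smul_one]
        rw [h1, mul_smul_comm, mul_one]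
      · exact (Commute.one_right (t • X)).smul_right _
    -- conjugation of Y
    have hconjY : NormedSpace.exp (t • X) * Y * NormedSpace.exp (-(t • X))
        = Real.exp (t * c) • Y := by
      rw [hexp, hsplit, mul_smul_comm, smul_mul_assoc, mul_assoc, hmul, mul_one]
    have := NormedSpace.exp_units_conj u Y
    simp only [u, Units.inv_mk, Units.val_mk] at this
    rw [hconjY] at this
    exact this.symm
  refine ⟨key, fun hc => ?_⟩
  have h1 : Tendsto (fun t : ℝ => Real.exp (t * c) • Y) atTop (nhds 0) := by
    have : Tendsto (fun t : ℝ => Real.exp (t * c)) atTop (nhds 0) := by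
      apply Real.tendsto_exp_atBot.comp
      exact tendsto_id.atTop_mul_const_of_neg hc
    simpa using this.smul_const Y
  have h2 : Tendsto (fun t : ℝ => NormedSpace.exp (Real.exp (t * c) • Y)) atTop (nhds 1) := by
    have := (NormedSpace.exp_continuous (𝔸 := A)).tendsto 0
    rw [NormedSpace.exp_zero] at this
    exact this.comp h1
  exact h2.congr fun t => (key t).symm
end

section
/- Let M be a compact metric space and Φ a continuous flow on M. If A ⊆ M is an attractor for Φ, then its dual repellor A* = M ∖ W⁺(A) is a repellor, i.e., A* is an attractor for the time-reversed flow Φ⁻(t,x) := Φ(−t,x). -/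
open Filter

variable {M : Type*} [MetricSpace M] [CompactSpace M]

section aux
variable {M : Type*} [MetricSpace M] (Φ : Flow ℝ M)

lemma flow_left_inv (s : ℝ) (x : M) : Φ (-s) (Φ s x) = x := by
  rw [← Φ.map_add, neg_add_cancel, Φ.map_zero_apply]

lemma flow_image_eq_preimage (s : ℝ) (S : Set M) : Φ s '' S = Φ (-s) ⁻¹' S :=
  congrFun (Set.image_eq_preimage_of_inverse (fun x => flow_left_inv Φ s x)
    (fun x => by simpa using flow_left_inv Φ (-s) x)) S

lemma flow_bijective (s : ℝ) : Function.Bijective (Φ s) :=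
  ⟨fun a b h => by simpa [flow_left_inv] using congrArg (Φ (-s)) h,
   fun y => ⟨Φ (-s) y, by simpa using flow_left_inv Φ (-s) y⟩⟩

lemma mem_wPlus_of_shift (A : Set M) {x : M} (hx : x ∈ wPlus Φ A) (s : ℝ) :
    Φ s x ∈ wPlus Φ A := by
  have h1 : Tendsto (fun t : ℝ => t + s) atTop atTop :=
    tendsto_atTop_add_const_right _ s tendsto_id
  have h2 := hx.comp h1
  show Tendsto (fun t : ℝ => EMetric.infEdist (Φ t (Φ s x)) A) atTop (nhds 0)
  simp only [Function.comp_def] at h2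
  simpa only [← Φ.map_add] using h2

lemma shift_mem_wPlus_iff (A : Set M) (s : ℝ) (x : M) :
    Φ s x ∈ wPlus Φ A ↔ x ∈ wPlus Φ A := by
  refine ⟨fun h => ?_, fun h => mem_wPlus_of_shift Φ A h s⟩
  have := mem_wPlus_of_shift Φ A h (-s)
  rwa [flow_left_inv] at this

lemma eventually_mem_of_wPlus (A : Set M) (hAc : IsCompact A) {V : Set M}
    (hV : IsOpen V) (hAV : A ⊆ V) {x : M} (hx : x ∈ wPlus Φ A) :
    ∀ᶠ t in atTop, Φ t x ∈ V := by
  obtain ⟨δ, hδ, hsub⟩ := hAc.exists_thickening_subset_open hV hAV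
  filter_upwards [hx.eventually (gt_mem_nhds (ENNReal.ofReal_pos.2 hδ))] with t ht
  exact hsub (Metric.mem_thickening_iff_infEdist_lt.2 ht)

end aux

/-- If `A` is an attractor for a continuous flow `Φ` on a compact
metric space, then its dual repellor `A* = M ∖ W⁺(A)` is a repellor, i.e. an attractor
for the time-reversed flow `Φ⁻(t,x) = Φ(−t,x)`. -/
theorem dualRepellor_isRepellor
    {M : Type*} [MetricSpace M] [CompactSpace M] (Φ : Flow ℝ M)
    (A : Set M) (hA : IsAttractor (fun t x => Φ t x) A) :
    IsAttractor (fun (t : ℝ) (x : M) => Φ (-t) x) (Set.univ \ wPlus Φ A) := by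
  obtain ⟨hAc, hAinv, U, hAU, hU, hAeq⟩ := hA
  have hU' : ∀ t > (0 : ℝ), Φ t '' closure U ⊆ interior U := hU
  have hAeq' : A = ⋂ t ∈ Set.Ici (0 : ℝ), Φ t '' U := hAeq
  clear hU hAeq hAinv
  -- monotonicity of the images of `closure U`
  have hcomm : ∀ t₁ t₂ : ℝ, Φ (t₁ + t₂) '' closure U = Φ t₁ '' (Φ t₂ '' closure U) := by
    intro t₁ t₂
    rw [← Set.image_comp]
    apply congrArg (· '' closure U)
    funext x
    simp [← Φ.map_add]
  have hmono : ∀ t₁ t₂ : ℝ, t₁ ≤ t₂ → Φ t₂ '' closure U ⊆ Φ t₁ '' closure U := by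
    intro t₁ t₂ h
    rcases eq_or_lt_of_le h with rfl | h
    · exact subset_rfl
    · have h2 : Φ t₂ '' closure U = Φ t₁ '' (Φ (t₂ - t₁) '' closure U) := by
        rw [← hcomm]; norm_num
      rw [h2]
      exact Set.image_mono (((hU' _ (by linarith)).trans interior_subset).trans
        subset_closure)
  have hKA : ⋂ (n : ℕ), Φ (n : ℝ) '' closure U ⊆ A := by
    rw [hAeq']
    intro x hx
    refine Set.mem_iInter₂.2 fun t ht => ?_
    obtain ⟨n, hn⟩ := exists_nat_ge (t + 1)
    have hx' : x ∈ Φ ((n : ℝ)) '' closure U := Set.mem_iInter.1 hx n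
    have h2 : Φ ((n : ℝ)) '' closure U = Φ t '' (Φ ((n : ℝ) - t) '' closure U) := by
      rw [← hcomm]; norm_num
    rw [h2] at hx'
    exact Set.image_mono ((hU' _ (by linarith)).trans interior_subset) hx'
  have hfind : ∀ W' : Set M, IsOpen W' → A ⊆ W' → ∃ n : ℕ, Φ (n : ℝ) '' closure U ⊆ W' := by
    intro W' hW'o hAW'
    by_contra hcon
    push_neg at hcon
    have hZne : ∀ n : ℕ, (Φ (n : ℝ) '' closure U ∩ W'ᶜ).Nonempty := fun n => by
      rcases Set.not_subset.1 (hcon n) with ⟨y, hy1, hy2⟩; exact ⟨y, hy1, hy2⟩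
    have hcomp : ∀ n : ℕ, IsCompact (Φ (n : ℝ) '' closure U ∩ W'ᶜ) := fun n =>
      ((isClosed_closure.isCompact).image
        (Φ.continuous continuous_const continuous_id)).inter_right
        (isClosed_compl_iff.2 hW'o)
    have hdir : Directed (· ⊇ ·) (fun n : ℕ => Φ (n : ℝ) '' closure U ∩ W'ᶜ) := by
      intro m n
      exact ⟨max m n,
        Set.inter_subset_inter_left _ (hmono _ _ (by exact_mod_cast le_max_left m n)),
        Set.inter_subset_inter_left _ (hmono _ _ (by exact_mod_cast le_max_right m n))⟩
    obtain ⟨y, hy⟩ := IsCompact.nonempty_iInter_of_directed_nonempty_isCompact_isClosed _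
      hdir hZne hcomp (fun n => (hcomp n).isClosed)
    simp only [Set.mem_iInter, Set.mem_inter_iff] at hy
    exact (hy 0).2 (hAW' (hKA (Set.mem_iInter.2 fun n => (hy n).1)))
  have hclU : closure U ⊆ wPlus Φ A := by
    intro x hx
    show Tendsto (fun t : ℝ => EMetric.infEdist (Φ t x) A) atTop (nhds 0)
    rw [ENNReal.tendsto_nhds_zero]
    intro ε hε
    obtain ⟨n, hn⟩ := hfind {y | EMetric.infEdist y A < ε}
      (isOpen_Iio.preimage EMetric.continuous_infEdist)
      (fun y hy => by show EMetric.infEdist y A < ε; exact lt_of_eq_of_lt (EMetric.infEdist_zero_of_mem hy) hε)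
    filter_upwards [eventually_ge_atTop (n : ℝ)] with t ht
    exact le_of_lt (hn (hmono _ _ ht ⟨x, hx, rfl⟩))
  have hchar' : ∀ x ∈ wPlus Φ A, ∃ t ≥ (0 : ℝ), Φ t x ∈ interior U := by
    intro x hx
    have hev := eventually_mem_of_wPlus Φ A hAc isOpen_interior hAU hx
    obtain ⟨t, htU, ht0⟩ := (hev.and (eventually_ge_atTop 0)).exists
    exact ⟨t, ht0, htU⟩
  have hchar : ∀ x, x ∈ wPlus Φ A ↔ ∃ t ≥ (0 : ℝ), Φ t x ∈ closure U := by
    intro x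
    constructor
    · intro hx
      obtain ⟨t, ht0, htU⟩ := hchar' x hx
      exact ⟨t, ht0, subset_closure (interior_subset htU)⟩
    · rintro ⟨t, ht0, htU⟩
      exact (shift_mem_wPlus_iff Φ A t x).1 (hclU htU)
  have hWopen : IsOpen (wPlus Φ A) := by
    rw [isOpen_iff_mem_nhds]
    intro x hx
    obtain ⟨t, ht0, htU⟩ := hchar' x hx
    have hN : IsOpen ((fun y => Φ t y) ⁻¹' interior U) :=
      isOpen_interior.preimage (Φ.continuous continuous_const continuous_id)
    exact Filter.mem_of_superset (hN.mem_nhds htU)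
      (fun y hy => (hchar y).2 ⟨t, ht0, subset_closure (interior_subset hy)⟩)
  have hWinv : ∀ s : ℝ, Φ s '' wPlus Φ A = wPlus Φ A := by
    intro s
    rw [flow_image_eq_preimage]
    ext y
    exact shift_mem_wPlus_iff Φ A (-s) y
  refine ⟨?_, ?_, (closure U)ᶜ, ?_, ?_, ?_⟩
  · rw [← Set.compl_eq_univ_diff]
    exact (hWopen.isClosed_compl).isCompact
  · intro t
    show Φ (-t) '' (Set.univ \ wPlus Φ A) = Set.univ \ wPlus Φ A
    rw [← Set.compl_eq_univ_diff, Set.image_compl_eq (flow_bijective Φ (-t)), hWinv]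
  · rw [← Set.compl_eq_univ_diff, interior_compl, closure_closure]
    exact Set.compl_subset_compl.2 hclU
  · intro t ht
    show Φ (-t) '' closure ((closure U)ᶜ) ⊆ interior ((closure U)ᶜ)
    rw [closure_compl, interior_compl, closure_closure, flow_image_eq_preimage, neg_neg]
    intro x hx
    simp only [Set.mem_preimage, Set.mem_compl_iff] at hx ⊢
    intro hxc
    exact hx (interior_mono subset_closure (hU' t ht ⟨x, hxc, rfl⟩))
  · ext x
    simp only [Set.mem_iInter, Set.mem_diff, Set.mem_univ, true_and, Set.mem_Ici]
    constructor
    · intro hxW t ht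
      rw [show (fun (t : ℝ) (x : M) => Φ (-t) x) t '' (closure U)ᶜ = Φ t ⁻¹' (closure U)ᶜ
        from by rw [show (fun (t : ℝ) (x : M) => Φ (-t) x) t = Φ (-t) from rfl,
          flow_image_eq_preimage, neg_neg]]
      intro hc
      exact hxW ((hchar x).2 ⟨t, ht, hc⟩)
    · intro h
      intro hxW
      obtain ⟨t, ht, hc⟩ := (hchar x).1 hxW
      have := h t ht
      rw [show (fun (t : ℝ) (x : M) => Φ (-t) x) t '' (closure U)ᶜ = Φ t ⁻¹' (closure U)ᶜ
        from by rw [show (fun (t : ℝ) (x : M) => Φ (-t) x) t = Φ (-t) from rfl,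
          flow_image_eq_preimage, neg_neg]] at this
      exact this hc
end
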